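/- arXiv:math/0603236 — 3 statements merged into one kernel-verified Lean document; each statement's English description precedes it below -/
import Mathlib

section
/- Let g : [0,∞) → ℝ be a nonnegative C¹ function satisfying the differential inequality g'(t) ≤ −γ(t)·g(t) + α(t)·g(t)² + β(t) for all t ≥ 0, where γ, α, β : [0,∞) → ℝ are nonnegative continuous functions. Suppose there exists a C¹ function μ : [0,∞) → ℝ with μ(t) > 0 for all t and μ(t) → ∞ as t → ∞, such that (i) α(t) ≤ (μ(t)/2)·(γ(t) − μ'(t)/μ(t)) for all t ≥ 0, (ii) β(t) ≤ (1/(2μ(t)))·(γ(t) − μ'(t)/μ(t)) for all t ≥ 0, and (iii) g(0)·μ(0) < 1. Then 0 ≤ g(t) < 1/μ(t) for all t ∈ [0,∞). -/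
open Set Filter

/-- Lemma 1 (Ramm): a nonlinear differential inequality.  If a nonnegative `C¹`
function `g` on `[0,∞)` satisfies `g' ≤ -γ g + α g² + β` with nonnegative
continuous coefficients, and there is a positive `C¹` function `μ → ∞` with
`α ≤ (μ/2)(γ - μ'/μ)`, `β ≤ (1/(2μ))(γ - μ'/μ)` and `g(0)μ(0) < 1`, then
`0 ≤ g(t) < 1/μ(t)` for all `t ≥ 0`. -/
theorem stmt_0 (g g' gam alpha beta mu mu' : ℝ → ℝ)
    (hg_deriv : ∀ t ∈ Ici (0:ℝ), HasDerivAt g (g' t) t)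
    (hg'_cont : ContinuousOn g' (Ici 0))
    (hg_nonneg : ∀ t ∈ Ici (0:ℝ), 0 ≤ g t)
    (hgam_cont : ContinuousOn gam (Ici 0))
    (hgam_nonneg : ∀ t ∈ Ici (0:ℝ), 0 ≤ gam t)
    (halpha_cont : ContinuousOn alpha (Ici 0))
    (halpha_nonneg : ∀ t ∈ Ici (0:ℝ), 0 ≤ alpha t)
    (hbeta_cont : ContinuousOn beta (Ici 0))
    (hbeta_nonneg : ∀ t ∈ Ici (0:ℝ), 0 ≤ beta t)
    (hineq : ∀ t ∈ Ici (0:ℝ), g' t ≤ -gam t * g t + alpha t * (g t) ^ 2 + beta t)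
    (hmu_deriv : ∀ t ∈ Ici (0:ℝ), HasDerivAt mu (mu' t) t)
    (hmu'_cont : ContinuousOn mu' (Ici 0))
    (hmu_pos : ∀ t ∈ Ici (0:ℝ), 0 < mu t)
    (hmu_inf : Tendsto mu atTop atTop)
    (hi : ∀ t ∈ Ici (0:ℝ), alpha t ≤ (mu t / 2) * (gam t - mu' t / mu t))
    (hii : ∀ t ∈ Ici (0:ℝ), beta t ≤ (1 / (2 * mu t)) * (gam t - mu' t / mu t))
    (hiii : g 0 * mu 0 < 1) :
    ∀ t ∈ Ici (0:ℝ), 0 ≤ g t ∧ g t < 1 / mu t := by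
  -- reformulated coefficient bounds
  have hα2 : ∀ x ∈ Ici (0:ℝ), 2 * alpha x ≤ gam x * mu x - mu' x := by
    intro x hx
    have hm := hmu_pos x hx
    have h := hi x hx
    have e1 : (mu x / 2) * (gam x - mu' x / mu x) * 2 = gam x * mu x - mu' x := by
      field_simp
    nlinarith [h]
  have hβ2 : ∀ x ∈ Ici (0:ℝ), beta x * (2 * (mu x)^2) ≤ gam x * mu x - mu' x := by
    intro x hx
    have hm := hmu_pos x hx
    have h := hii x hx
    have e1 : (1 / (2 * mu x)) * (gam x - mu' x / mu x) * (2 * (mu x)^2)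
        = gam x * mu x - mu' x := by
      have hne : mu x ≠ 0 := hm.ne'
      field_simp
    nlinarith [mul_le_mul_of_nonneg_right h (show (0:ℝ) ≤ 2 * (mu x)^2 by positivity)]
  have hd0 : ∀ x ∈ Ici (0:ℝ), 0 ≤ gam x * mu x - mu' x := by
    intro x hx
    have hm := hmu_pos x hx
    have := hβ2 x hx
    nlinarith [hbeta_nonneg x hx]
  have key : ∀ t ∈ Ici (0:ℝ), g t * mu t < 1 := by
    by_contra hcon
    push_neg at hcon
    obtain ⟨t₀, ht₀, ht₀w⟩ := hcon
    set S : Set ℝ := {t | 0 ≤ t ∧ 1 ≤ g t * mu t} with hS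
    have hSne : S.Nonempty := ⟨t₀, ht₀, ht₀w⟩
    have hSbdd : BddBelow S := ⟨0, fun x hx => hx.1⟩
    have hwcont : ContinuousOn (fun t => g t * mu t) (Ici 0) := fun x hx =>
      (((hg_deriv x hx).continuousAt).mul ((hmu_deriv x hx).continuousAt)).continuousWithinAt
    have hSclosed : IsClosed S := by
      have hrw : S = Ici 0 ∩ (fun t => g t * mu t) ⁻¹' (Ici 1) := by
        ext x; simp [hS, Set.mem_setOf_eq]
      rw [hrw]
      exact hwcont.preimage_isClosed_of_isClosed isClosed_Ici isClosed_Ici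
    set T := sInf S with hT
    have hTS : T ∈ S := hSclosed.csInf_mem hSne hSbdd
    have hT0 : (0:ℝ) ≤ T := hTS.1
    have hTpos : 0 < T := by
      rcases hT0.lt_or_eq with h | h
      · exact h
      · exfalso; rw [← h] at hTS; linarith [hTS.2]
    have hbefore : ∀ x, 0 ≤ x → x < T → g x * mu x < 1 := by
      intro x hx0 hxT
      by_contra h
      push_neg at h
      exact absurd (csInf_le hSbdd ⟨hx0, h⟩) (not_le.2 hxT)
    -- the coefficient c and its bound K on [0,T]
    set c : ℝ → ℝ := fun x => (gam x * mu x - mu' x) / (2 * mu x) with hc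
    have hIcc : Icc (0:ℝ) T ⊆ Ici 0 := fun x hx => hx.1
    have hmucont : ContinuousOn mu (Ici 0) := fun x hx =>
      ((hmu_deriv x hx).continuousAt).continuousWithinAt
    have hccont : ContinuousOn c (Icc 0 T) := by
      apply ContinuousOn.div
      · exact ((hgam_cont.mono hIcc).mul (hmucont.mono hIcc)).sub (hmu'_cont.mono hIcc)
      · exact (continuousOn_const.mul (hmucont.mono hIcc))
      · intro x hx
        have := hmu_pos x (hIcc hx)
        positivity
    obtain ⟨x₀, hx₀, hmax⟩ := isCompact_Icc.exists_isMaxOn (nonempty_Icc.2 hT0) hccont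
    set K := c x₀ with hK
    -- auxiliary function h
    set h : ℝ → ℝ := fun x => (1 - g x * mu x) * Real.exp (K * x) with hh
    have hderivh : ∀ x ∈ Ici (0:ℝ), HasDerivAt h
        ((-(g' x * mu x + g x * mu' x)) * Real.exp (K * x)
          + (1 - g x * mu x) * (K * Real.exp (K * x))) x := by
      intro x hx
      have h1 : HasDerivAt (fun y => 1 - g y * mu y) (-(g' x * mu x + g x * mu' x)) x := by
        have h2 := (hasDerivAt_const x (1:ℝ)).sub ((hg_deriv x hx).mul (hmu_deriv x hx))
        rw [zero_sub] at h2; exact h2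
      have h2 : HasDerivAt (fun y => Real.exp (K * y)) (K * Real.exp (K * x)) x := by
        have h3 := ((hasDerivAt_id x).const_mul K).exp
        simpa [mul_comm] using h3
      exact h1.mul h2
    have hconth : ContinuousOn h (Icc 0 T) := fun x hx =>
      ((hderivh x (hIcc hx)).continuousAt).continuousWithinAt
    have hdiff : DifferentiableOn ℝ h (interior (Icc 0 T)) := by
      rw [interior_Icc]
      intro x hx
      exact ((hderivh x (hIcc ⟨hx.1.le, hx.2.le⟩)).differentiableAt).differentiableWithinAt
    have hderivnn : ∀ x ∈ interior (Icc 0 T), 0 ≤ deriv h x := by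
      rw [interior_Icc]
      intro x hx
      have hxI : x ∈ Ici (0:ℝ) := le_of_lt hx.1
      rw [(hderivh x hxI).deriv]
      have hm := hmu_pos x hxI
      have hgx := hg_nonneg x hxI
      have hw : g x * mu x < 1 := hbefore x hx.1.le hx.2
      have hd := hd0 x hxI
      -- w' ≤ c (1 - w)
      have step1 : g' x * mu x + g x * mu' x ≤ c x * (1 - g x * mu x) := by
        have hle := hineq x hxI
        have hA := hα2 x hxI
        have hB := hβ2 x hxI
        have goal' : 2 * mu x * (g' x * mu x + g x * mu' x)
            ≤ (gam x * mu x - mu' x) * (1 - g x * mu x) := by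
          nlinarith [mul_le_mul_of_nonneg_left hle (show (0:ℝ) ≤ 2 * (mu x)^2 by positivity),
            mul_le_mul_of_nonneg_right hA (show (0:ℝ) ≤ (g x)^2 * (mu x)^2 by positivity),
            mul_nonneg (mul_nonneg hd (mul_nonneg hgx hm.le)) (sub_nonneg.2 hw.le)]
        have hcx : c x = (gam x * mu x - mu' x) / (2 * mu x) := rfl
        rw [hcx, div_mul_eq_mul_div, le_div_iff₀ (by positivity : (0:ℝ) < 2 * mu x)]
        nlinarith [goal']
      have step2 : c x * (1 - g x * mu x) ≤ K * (1 - g x * mu x) :=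
        mul_le_mul_of_nonneg_right (hmax ⟨hx.1.le, hx.2.le⟩) (by linarith)
      have hexp := Real.exp_pos (K * x)
      nlinarith [step1, step2, mul_le_mul_of_nonneg_right (step1.trans step2) hexp.le]
    have hmono : MonotoneOn h (Icc 0 T) :=
      monotoneOn_of_deriv_nonneg (convex_Icc 0 T) hconth hdiff hderivnn
    have hle := hmono (left_mem_Icc.2 hT0) (right_mem_Icc.2 hT0) hT0
    have h0 : h 0 = 1 - g 0 * mu 0 := by simp [hh]
    have hTv : h T ≤ 0 := by
      have hexp := Real.exp_pos (K * T)
      have : (1:ℝ) ≤ g T * mu T := hTS.2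
      have : h T = (1 - g T * mu T) * Real.exp (K * T) := rfl
      nlinarith [Real.exp_pos (K * T)]
    rw [h0] at hle
    linarith
  intro t ht
  refine ⟨hg_nonneg t ht, ?_⟩
  have hm := hmu_pos t ht
  rw [lt_div_iff₀ hm]
  simpa using key t ht
end

section
/- Let H be a real Hilbert space and let A, Ã : H → H be bounded linear operators with ‖A‖ ≤ M₁ and ‖Ã‖ ≤ M₁. Set T := A*A and T̃ := Ã*Ã. Then for every a > 0, a·‖((T + aI)⁻¹ − (T̃ + aI)⁻¹)·T̃‖ ≤ 2·M₁·‖A − Ã‖. -/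
open ContinuousLinearMap

section Aux

variable {H : Type*} [NormedAddCommGroup H] [InnerProductSpace ℝ H] [CompleteSpace H]

private lemma expand_sq (A : H →L[ℝ] H) (a : ℝ) (ha : 0 < a) (x : H) :
    ‖(adjoint A * A + a • (1 : H →L[ℝ] H)) x‖ ^ 2
      = ‖(adjoint A * A) x‖ ^ 2 + 2 * a * ‖A x‖ ^ 2 + a ^ 2 * ‖x‖ ^ 2 := by
  have h1 : (adjoint A * A + a • (1 : H →L[ℝ] H)) x = (adjoint A * A) x + a • x := by
    simp [ContinuousLinearMap.add_apply]
  have h2 : inner ℝ ((adjoint A * A) x) x = (‖A x‖ : ℝ) ^ 2 := by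
    rw [ContinuousLinearMap.mul_apply, ContinuousLinearMap.adjoint_inner_left,
      real_inner_self_eq_norm_sq]
  rw [h1, norm_add_sq_real, real_inner_smul_right, h2, norm_smul, mul_pow,
    Real.norm_eq_abs, abs_of_pos ha]
  ring

private lemma low_bound (A : H →L[ℝ] H) (a : ℝ) (ha : 0 < a) (x : H) :
    a * ‖x‖ ≤ ‖(adjoint A * A + a • (1 : H →L[ℝ] H)) x‖ := by
  have h := expand_sq A a ha x
  have hsq : (a * ‖x‖) ^ 2 ≤ ‖(adjoint A * A + a • (1 : H →L[ℝ] H)) x‖ ^ 2 := by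
    rw [h]; nlinarith [sq_nonneg ‖(adjoint A * A) x‖, sq_nonneg ‖A x‖]
  exact (pow_le_pow_iff_left₀ (by positivity) (norm_nonneg _) (by norm_num)).mp hsq

private lemma T_bound (A : H →L[ℝ] H) (a : ℝ) (ha : 0 < a) (x : H) :
    ‖(adjoint A * A) x‖ ≤ ‖(adjoint A * A + a • (1 : H →L[ℝ] H)) x‖ := by
  have h := expand_sq A a ha x
  have hsq : ‖(adjoint A * A) x‖ ^ 2 ≤ ‖(adjoint A * A + a • (1 : H →L[ℝ] H)) x‖ ^ 2 := by
    rw [h]; nlinarith [sq_nonneg ‖A x‖, sq_nonneg (a * ‖x‖)]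
  exact (pow_le_pow_iff_left₀ (norm_nonneg _) (norm_nonneg _) (by norm_num)).mp hsq

private lemma isUnit_S (A : H →L[ℝ] H) (a : ℝ) (ha : 0 < a) :
    IsUnit (adjoint A * A + a • (1 : H →L[ℝ] H)) := by
  refine ContinuousLinearMap.isUnit_of_forall_le_norm_inner_map _ (c := ⟨a, ha.le⟩)
    (by exact_mod_cast ha) fun x => ?_
  have h2 : inner ℝ ((adjoint A * A) x) x = (‖A x‖ : ℝ) ^ 2 := by
    rw [ContinuousLinearMap.mul_apply, ContinuousLinearMap.adjoint_inner_left,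
      real_inner_self_eq_norm_sq]
  have : (inner ℝ ((adjoint A * A + a • (1 : H →L[ℝ] H)) x) x : ℝ)
      = ‖A x‖ ^ 2 + a * ‖x‖ ^ 2 := by
    have h1 : (adjoint A * A + a • (1 : H →L[ℝ] H)) x = (adjoint A * A) x + a • x := by
      simp [ContinuousLinearMap.add_apply]
    rw [h1, inner_add_left, h2, real_inner_smul_left, real_inner_self_eq_norm_sq]
  rw [this, Real.norm_eq_abs, abs_of_nonneg (by positivity)]
  change ‖x‖ ^ 2 * a ≤ _
  nlinarith [sq_nonneg ‖A x‖]

end Aux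

/-- For bounded linear operators `A`, `B` on a real Hilbert space with
`‖A‖ ≤ M₁`, `‖B‖ ≤ M₁`, `T := A*A`, `T̃ := B*B`, and any `a > 0`,
`a‖((T + aI)⁻¹ − (T̃ + aI)⁻¹) T̃‖ ≤ 2 M₁ ‖A − B‖`. -/
theorem stmt_5 {H : Type*} [NormedAddCommGroup H] [InnerProductSpace ℝ H]
    [CompleteSpace H] (A B : H →L[ℝ] H) (M₁ : ℝ) (hM₁ : 0 < M₁)
    (hA : ‖A‖ ≤ M₁) (hB : ‖B‖ ≤ M₁) (a : ℝ) (ha : 0 < a) :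
    a * ‖(Ring.inverse (ContinuousLinearMap.adjoint A * A + a • (1 : H →L[ℝ] H)) -
          Ring.inverse (ContinuousLinearMap.adjoint B * B + a • (1 : H →L[ℝ] H))) *
          (ContinuousLinearMap.adjoint B * B)‖ ≤ 2 * M₁ * ‖A - B‖ := by
  set T : H →L[ℝ] H := adjoint A * A with hT
  set T' : H →L[ℝ] H := adjoint B * B with hT'
  set S : H →L[ℝ] H := T + a • (1 : H →L[ℝ] H) with hS
  set S' : H →L[ℝ] H := T' + a • (1 : H →L[ℝ] H) with hS'
  have hUS : IsUnit S := isUnit_S A a ha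
  have hUS' : IsUnit S' := isUnit_S B a ha
  set iS := Ring.inverse S with hiS
  set iS' := Ring.inverse S' with hiS'
  have hSiS : S * iS = 1 := Ring.mul_inverse_cancel S hUS
  have hiSS : iS * S = 1 := Ring.inverse_mul_cancel S hUS
  have hS'iS' : S' * iS' = 1 := Ring.mul_inverse_cancel S' hUS'
  have hiS'S' : iS' * S' = 1 := Ring.inverse_mul_cancel S' hUS'
  -- resolvent identity
  have hres : iS - iS' = iS * (S' - S) * iS' := by
    have : iS * (S' - S) * iS' = iS * (S' * iS') - (iS * S) * iS' := by
      noncomm_ring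
    rw [this, hS'iS', hiSS, mul_one, one_mul]
  -- commute T' with iS'
  have hcomm : iS' * T' = T' * iS' := by
    have hc : T' * S' = S' * T' := by
      rw [hS']; simp [mul_add, add_mul, mul_smul_comm, smul_mul_assoc]
    calc iS' * T' = iS' * T' * (S' * iS') := by rw [hS'iS', mul_one]
      _ = iS' * (T' * S') * iS' := by noncomm_ring
      _ = iS' * (S' * T') * iS' := by rw [hc]
      _ = (iS' * S') * (T' * iS') := by noncomm_ring
      _ = T' * iS' := by rw [hiS'S', one_mul]
  -- norm bounds
  have hniS : ‖iS‖ ≤ 1 / a := by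
    refine ContinuousLinearMap.opNorm_le_bound _ (by positivity) fun x => ?_
    have h1 : S (iS x) = x := by
      have := congrArg (fun f : H →L[ℝ] H => f x) hSiS
      simpa using this
    have h2 := low_bound A a ha (iS x)
    rw [h1] at h2
    rw [div_mul_eq_mul_div, le_div_iff₀ ha]
    simpa [mul_comm] using h2
  have hniS'T' : ‖iS' * T'‖ ≤ 1 := by
    rw [hcomm]
    refine ContinuousLinearMap.opNorm_le_bound _ zero_le_one fun x => ?_
    have h1 : S' (iS' x) = x := by
      have := congrArg (fun f : H →L[ℝ] H => f x) hS'iS'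
      simpa using this
    have h2 := T_bound B a ha (iS' x)
    rw [h1] at h2
    simpa [hT'] using h2
  have hdT : ‖T' - T‖ ≤ 2 * M₁ * ‖A - B‖ := by
    have heq : T' - T = adjoint B * (B - A) + adjoint (B - A) * A := by
      rw [hT, hT', map_sub]; noncomm_ring
    calc ‖T' - T‖ = ‖adjoint B * (B - A) + adjoint (B - A) * A‖ := by rw [heq]
      _ ≤ ‖adjoint B * (B - A)‖ + ‖adjoint (B - A) * A‖ := norm_add_le _ _
      _ ≤ ‖adjoint B‖ * ‖B - A‖ + ‖adjoint (B - A)‖ * ‖A‖ :=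
          add_le_add (norm_mul_le _ _) (norm_mul_le _ _)
      _ = ‖B‖ * ‖A - B‖ + ‖A - B‖ * ‖A‖ := by
          rw [adjoint.norm_map, adjoint.norm_map, norm_sub_rev]
      _ ≤ M₁ * ‖A - B‖ + ‖A - B‖ * M₁ :=
          add_le_add (mul_le_mul_of_nonneg_right hB (norm_nonneg _))
            (mul_le_mul_of_nonneg_left hA (norm_nonneg _))
      _ = 2 * M₁ * ‖A - B‖ := by ring
  -- assemble
  have hfact : (iS - iS') * T' = iS * (T' - T) * (iS' * T') := by
    have h1 : S' - S = T' - T := by rw [hS, hS']; abel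
    rw [hres, h1]; noncomm_ring
  calc a * ‖(iS - iS') * T'‖ = a * ‖iS * (T' - T) * (iS' * T')‖ := by rw [hfact]
    _ ≤ a * (‖iS * (T' - T)‖ * ‖iS' * T'‖) := by
        have := norm_mul_le (iS * (T' - T)) (iS' * T')
        nlinarith [norm_nonneg (iS * (T' - T) * (iS' * T'))]
    _ ≤ a * ((‖iS‖ * ‖T' - T‖) * 1) := by
        have h1 := norm_mul_le iS (T' - T)
        have h2 : ‖iS * (T' - T)‖ * ‖iS' * T'‖ ≤ (‖iS‖ * ‖T' - T‖) * 1 := by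
          apply mul_le_mul h1 hniS'T' (norm_nonneg _)
          positivity
        nlinarith
    _ ≤ a * (((1 / a) * (2 * M₁ * ‖A - B‖)) * 1) := by
        have : ‖iS‖ * ‖T' - T‖ ≤ (1 / a) * (2 * M₁ * ‖A - B‖) := by
          apply mul_le_mul hniS hdT (norm_nonneg _)
          positivity
        nlinarith
    _ = 2 * M₁ * ‖A - B‖ := by
        rw [mul_one, ← mul_assoc, mul_one_div_cancel ha.ne', one_mul]
end

section
/- Let H be a real Hilbert space, u₀ ∈ H, R > 0, and let F : H → H be twice continuously Fréchet differentiable on the ball B(u₀,R) with ‖F'(u)‖ ≤ M₁ and ‖F''(u)‖ ≤ M₂ for all u ∈ B(u₀,R). Let y ∈ B(u₀,R), f := F(y), and let f_δ ∈ H with ‖f_δ − f‖ ≤ δ, δ > 0. Set T̃ := F'(y)*F'(y), c₀ := M₂/4, and let v ∈ H satisfy 2·M₁·M₂·‖v‖ ≤ 1/2; set z := y − T̃v. Let a : [0,∞) → ℝ satisfy a(t) > 0 for all t. Suppose u_δ : [0,∞) → H is differentiable and, writing A(t) := F'(u_δ(t)) and T(t) := A(t)*A(t), satisfies u_δ'(t)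 = −(T(t) + a(t)I)⁻¹·[A(t)*(F(u_δ(t)) − f_δ) + a(t)(u_δ(t) − z)] for all t with u_δ(t) ∈ B(u₀,R). Then for every such t, writing w(t) := u_δ(t) − y, the inequality ⟨u_δ'(t), w(t)⟩ ≤ −‖w(t)‖²/2 + c₀·‖w(t)‖³/√(a(t)) + a(t)·‖v‖·‖w(t)‖ + δ·‖w(t)‖/(2√(a(t))) holds. -/
open Set Metric RealInnerProductSpace ContinuousLinearMap

section Aux
variable {H : Type*} [NormedAddCommGroup H] [InnerProductSpace ℝ H] [CompleteSpace H]

lemma aux_inner (A : H →L[ℝ] H) (α : ℝ) (x : H) :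
    ⟪(ContinuousLinearMap.adjoint A * A + α • (1 : H →L[ℝ] H)) x, x⟫
      = ‖A x‖ ^ 2 + α * ‖x‖ ^ 2 := by
  simp only [ContinuousLinearMap.add_apply, ContinuousLinearMap.mul_apply,
    ContinuousLinearMap.smul_apply, ContinuousLinearMap.one_apply, inner_add_left,
    real_inner_smul_left]
  rw [ContinuousLinearMap.adjoint_inner_left, real_inner_self_eq_norm_sq,
    real_inner_self_eq_norm_sq]

lemma aux_isUnit (A : H →L[ℝ] H) {α : ℝ} (hα : 0 < α) :
    IsUnit (ContinuousLinearMap.adjoint A * A + α • (1 : H →L[ℝ] H)) := by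
  apply ContinuousLinearMap.isUnit_of_forall_le_norm_inner_map _ (c := ⟨α, hα.le⟩)
    (by exact_mod_cast hα)
  intro x
  rw [aux_inner]
  have h1 : (0:ℝ) ≤ ‖A x‖ ^ 2 + α * ‖x‖ ^ 2 := by positivity
  rw [Real.norm_of_nonneg h1]
  change ‖x‖ ^ 2 * α ≤ _
  nlinarith [sq_nonneg ‖A x‖]

end Aux

section Aux2
variable {H : Type*} [NormedAddCommGroup H] [InnerProductSpace ℝ H] [CompleteSpace H]
  (A : H →L[ℝ] H) {α : ℝ}

local notation "L" => ContinuousLinearMap.adjoint A * A + α • (1 : H →L[ℝ] H)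
local notation "S" => Ring.inverse (ContinuousLinearMap.adjoint A * A + α • (1 : H →L[ℝ] H))

lemma aux_LS (hα : 0 < α) (x : H) : L (S x) = x := by
  rw [← ContinuousLinearMap.mul_apply, Ring.mul_inverse_cancel _ (aux_isUnit A hα),
    ContinuousLinearMap.one_apply]

lemma aux_SL (hα : 0 < α) (x : H) : S (L x) = x := by
  rw [← ContinuousLinearMap.mul_apply, Ring.inverse_mul_cancel _ (aux_isUnit A hα),
    ContinuousLinearMap.one_apply]

lemma aux_inv_norm (hα : 0 < α) (x : H) : ‖S x‖ ≤ ‖x‖ / α := by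
  set p := S x with hp
  have h1 : ⟪L p, p⟫ = ‖A p‖ ^ 2 + α * ‖p‖ ^ 2 := aux_inner A α p
  rw [aux_LS A hα] at h1
  have h2 : ⟪x, p⟫ ≤ ‖x‖ * ‖p‖ := real_inner_le_norm x p
  rw [le_div_iff₀ hα]
  nlinarith [sq_nonneg ‖A p‖, norm_nonneg p, norm_nonneg x, sq_nonneg (‖x‖ - α * ‖p‖)]

lemma aux_inv_adj (hα : 0 < α) (h : H) :
    ‖S (ContinuousLinearMap.adjoint A h)‖ ≤ ‖h‖ / (2 * Real.sqrt α) := by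
  set p := S (ContinuousLinearMap.adjoint A h) with hp
  have h1 : ⟪L p, p⟫ = ‖A p‖ ^ 2 + α * ‖p‖ ^ 2 := aux_inner A α p
  rw [aux_LS A hα] at h1
  have h2 : ⟪ContinuousLinearMap.adjoint A h, p⟫ = ⟪h, A p⟫ :=
    ContinuousLinearMap.adjoint_inner_left A p h
  have h3 : ⟪h, A p⟫ ≤ ‖h‖ * ‖A p‖ := real_inner_le_norm h (A p)
  have key : ‖A p‖ ^ 2 + α * ‖p‖ ^ 2 ≤ ‖h‖ * ‖A p‖ := by rw [← h1, h2]; exact h3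
  have hs : 0 < Real.sqrt α := Real.sqrt_pos.mpr hα
  have hs2 : Real.sqrt α ^ 2 = α := Real.sq_sqrt hα.le
  rw [le_div_iff₀ (by positivity)]
  rcases eq_or_lt_of_le (norm_nonneg (A p)) with h0 | h0
  · rw [← h0] at key
    have hp2 : ‖p‖ ^ 2 ≤ 0 := by nlinarith
    have : ‖p‖ = 0 := by nlinarith [norm_nonneg p]
    rw [this, zero_mul]; exact norm_nonneg h
  · nlinarith [sq_nonneg (‖A p‖ - Real.sqrt α * ‖p‖), norm_nonneg p]

lemma aux_normT_le (hα : 0 < α) (x : H) :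
    ‖(ContinuousLinearMap.adjoint A * A) x‖ ≤ ‖L x‖ := by
  have h1 : ‖(ContinuousLinearMap.adjoint A * A) x + α • x‖ ^ 2
      = ‖(ContinuousLinearMap.adjoint A * A) x‖ ^ 2
        + 2 * ⟪(ContinuousLinearMap.adjoint A * A) x, α • x⟫ + ‖α • x‖ ^ 2 :=
    norm_add_sq_real _ _
  have h2 : ⟪(ContinuousLinearMap.adjoint A * A) x, α • x⟫ = α * ‖A x‖ ^ 2 := by
    rw [real_inner_smul_right, ContinuousLinearMap.mul_apply,
      ContinuousLinearMap.adjoint_inner_left, real_inner_self_eq_norm_sq]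
  have h3 : L x = (ContinuousLinearMap.adjoint A * A) x + α • x := by
    simp [ContinuousLinearMap.add_apply, ContinuousLinearMap.smul_apply]
  have h4 : ‖(ContinuousLinearMap.adjoint A * A) x‖ ^ 2 ≤ ‖L x‖ ^ 2 := by
    rw [h3, h1, h2]
    nlinarith [sq_nonneg ‖A x‖, sq_nonneg ‖α • x‖]
  nlinarith [norm_nonneg ((ContinuousLinearMap.adjoint A * A) x), norm_nonneg (L x)]

lemma aux_comm (hα : 0 < α) (x : H) :
    S ((ContinuousLinearMap.adjoint A * A) x)
      = (ContinuousLinearMap.adjoint A * A) (S x) := by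
  have hu := aux_isUnit A hα
  have hc : (ContinuousLinearMap.adjoint A * A)
      * (ContinuousLinearMap.adjoint A * A + α • (1 : H →L[ℝ] H))
      = (ContinuousLinearMap.adjoint A * A + α • (1 : H →L[ℝ] H))
      * (ContinuousLinearMap.adjoint A * A) := by
    rw [mul_add, add_mul, Algebra.algebraMap_eq_smul_one (R := ℝ) (A := H →L[ℝ] H) α |>.symm,
      Algebra.commutes]
  have hS : S * (ContinuousLinearMap.adjoint A * A)
      = (ContinuousLinearMap.adjoint A * A) * S := by
    have h1 : S * (((ContinuousLinearMap.adjoint A * A) * L) * S)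
        = S * ((L * (ContinuousLinearMap.adjoint A * A)) * S) := by rw [hc]
    have h2 : S * (((ContinuousLinearMap.adjoint A * A) * L) * S)
        = S * (ContinuousLinearMap.adjoint A * A) := by
      rw [mul_assoc (ContinuousLinearMap.adjoint A * A), Ring.mul_inverse_cancel _ hu, mul_one]
    have h3 : S * ((L * (ContinuousLinearMap.adjoint A * A)) * S)
        = (ContinuousLinearMap.adjoint A * A) * S := by
      rw [mul_assoc L, ← mul_assoc S L, Ring.inverse_mul_cancel _ hu, one_mul]
    rw [← h2, h1, h3]
  calc S ((ContinuousLinearMap.adjoint A * A) x)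
      = (S * (ContinuousLinearMap.adjoint A * A)) x := rfl
    _ = ((ContinuousLinearMap.adjoint A * A) * S) x := by rw [hS]
    _ = (ContinuousLinearMap.adjoint A * A) (S x) := rfl

lemma aux_inv_T (hα : 0 < α) (x : H) :
    ‖S ((ContinuousLinearMap.adjoint A * A) x)‖ ≤ ‖x‖ := by
  rw [aux_comm A hα]
  calc ‖(ContinuousLinearMap.adjoint A * A) (S x)‖ ≤ ‖L (S x)‖ := aux_normT_le A hα _
    _ = ‖x‖ := by rw [aux_LS A hα]

end Aux2

lemma aux_taylor {H : Type*} [NormedAddCommGroup H] [InnerProductSpace ℝ H]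
    {s : Set H} (hs : Convex ℝ s) {F : H → H} {F' : H → H →L[ℝ] H}
    (hF' : ∀ x ∈ s, HasFDerivAt F (F' x) x) {M₂ : ℝ}
    (hlip : ∀ x ∈ s, ∀ x' ∈ s, ‖F' x - F' x'‖ ≤ M₂ * ‖x - x'‖)
    {p q : H} (hp : p ∈ s) (hq : q ∈ s) :
    ‖F q - F p - F' p (q - p)‖ ≤ M₂ / 2 * ‖q - p‖ ^ 2 := by
  set d := q - p with hd
  set g : ℝ → H := fun r => F (p + r • d) - F p - r • (F' p d) with hg
  have hmem : ∀ r ∈ Icc (0:ℝ) 1, p + r • d ∈ s := fun r hr =>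
    hs.add_smul_sub_mem hp hq hr
  have hder : ∀ r ∈ Icc (0:ℝ) 1,
      HasDerivAt g ((F' (p + r • d)) d - F' p d) r := by
    intro r hr
    have hline : HasDerivAt (fun r : ℝ => p + r • d) d r := by
      simpa using ((hasDerivAt_id r).smul_const d).const_add p
    have h1 : HasDerivAt (fun r : ℝ => F (p + r • d)) ((F' (p + r • d)) d) r :=
      (hF' _ (hmem r hr)).comp_hasDerivAt r hline
    have h2 : HasDerivAt (fun r : ℝ => r • (F' p d)) (F' p d) r := by
      simpa using (hasDerivAt_id r).smul_const (F' p d)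
    exact (h1.sub_const (F p)).sub h2
  have hbound : ∀ r ∈ Ico (0:ℝ) 1,
      ‖(F' (p + r • d)) d - F' p d‖ ≤ M₂ * ‖d‖ ^ 2 * r := by
    intro r hr
    have h1 : ‖F' (p + r • d) - F' p‖ ≤ M₂ * (r * ‖d‖) := by
      have := hlip _ (hmem r ⟨hr.1, hr.2.le⟩) _ hp
      simpa [norm_smul, abs_of_nonneg hr.1] using this
    calc ‖(F' (p + r • d)) d - F' p d‖ = ‖(F' (p + r • d) - F' p) d‖ := by
          rw [ContinuousLinearMap.sub_apply]
      _ ≤ ‖F' (p + r • d) - F' p‖ * ‖d‖ := ContinuousLinearMap.le_opNorm _ d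
      _ ≤ M₂ * (r * ‖d‖) * ‖d‖ := by
          apply mul_le_mul_of_nonneg_right h1 (norm_nonneg d)
      _ = M₂ * ‖d‖ ^ 2 * r := by ring
  have hB : ∀ x : ℝ, HasDerivAt (fun r : ℝ => M₂ * ‖d‖ ^ 2 / 2 * r ^ 2)
      (M₂ * ‖d‖ ^ 2 * x) x := by
    intro x
    have := (hasDerivAt_pow 2 x).const_mul (M₂ * ‖d‖ ^ 2 / 2)
    refine this.congr_deriv ?_
    push_cast; ring
  have hcont : ContinuousOn g (Icc 0 1) := fun r hr =>
    (hder r hr).continuousAt.continuousWithinAt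
  have := image_norm_le_of_norm_deriv_right_le_deriv_boundary hcont
    (fun r hr => (hder r ⟨hr.1, hr.2.le⟩).hasDerivWithinAt)
    (B := fun r => M₂ * ‖d‖ ^ 2 / 2 * r ^ 2) (by simp [hg]) hB hbound
    (x := 1) ⟨zero_le_one, le_refl 1⟩
  have hg1 : g 1 = F q - F p - F' p d := by simp [hg, hd]
  rw [hg1] at this
  calc ‖F q - F p - F' p d‖ ≤ M₂ * ‖d‖ ^ 2 / 2 * 1 ^ 2 := this
    _ = M₂ / 2 * ‖d‖ ^ 2 := by ring

set_option maxHeartbeats 1000000 in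
/-- Differential inequality (18) in the proof of Theorem 3 (Ramm, DSM): for
noisy data `f_δ` with `‖f_δ − F(y)‖ ≤ δ`, along a trajectory of
`u_δ' = -(T + aI)⁻¹[A*(F(u_δ) − f_δ) + a(u_δ − z)]`, with `A := F'(u_δ(t))`,
`T := A*A`, `z := y − F'(y)*F'(y) v`, `2M₁M₂‖v‖ ≤ 1/2`, one has, with
`w := u_δ − y` and `c₀ := M₂/4`,
`⟨u_δ', w⟩ ≤ -‖w‖²/2 + c₀‖w‖³/√a + a‖v‖‖w‖ + δ‖w‖/(2√a)`. -/
theorem stmt_11 {H : Type*} [NormedAddCommGroup H] [InnerProductSpace ℝ H]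
    [CompleteSpace H] (u₀ : H) (R M₁ M₂ : ℝ) (hR : 0 < R)
    (hM₁ : 0 < M₁) (hM₂ : 0 < M₂)
    (F : H → H) (F' : H → H →L[ℝ] H) (F'' : H → H →L[ℝ] H →L[ℝ] H)
    (hF' : ∀ x ∈ closedBall u₀ R, HasFDerivAt F (F' x) x)
    (hF'' : ∀ x ∈ closedBall u₀ R, HasFDerivAt F' (F'' x) x)
    (hF''cont : ContinuousOn F'' (closedBall u₀ R))
    (hM₁bd : ∀ x ∈ closedBall u₀ R, ‖F' x‖ ≤ M₁)
    (hM₂bd : ∀ x ∈ closedBall u₀ R, ‖F'' x‖ ≤ M₂)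
    (y : H) (hy : y ∈ closedBall u₀ R)
    (δ : ℝ) (hδ : 0 < δ) (fδ : H) (hfδ : ‖fδ - F y‖ ≤ δ)
    (v : H) (hv : 2 * M₁ * M₂ * ‖v‖ ≤ 1 / 2)
    (z : H) (hz : z = y - (ContinuousLinearMap.adjoint (F' y) * F' y) v)
    (a : ℝ → ℝ) (ha : ∀ t : ℝ, 0 ≤ t → 0 < a t)
    (u u' : ℝ → H)
    (hu : ∀ t : ℝ, 0 ≤ t → HasDerivAt u (u' t) t)
    (hode : ∀ t : ℝ, 0 ≤ t → u t ∈ closedBall u₀ R →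
      u' t = -(Ring.inverse (ContinuousLinearMap.adjoint (F' (u t)) * F' (u t)
            + a t • (1 : H →L[ℝ] H)))
          (ContinuousLinearMap.adjoint (F' (u t)) (F (u t) - fδ)
            + a t • (u t - z))) :
    ∀ t : ℝ, 0 ≤ t → u t ∈ closedBall u₀ R →
      ⟪u' t, u t - y⟫ ≤ -‖u t - y‖ ^ 2 / 2
        + (M₂ / 4) * ‖u t - y‖ ^ 3 / Real.sqrt (a t)
        + a t * ‖v‖ * ‖u t - y‖
        + δ * ‖u t - y‖ / (2 * Real.sqrt (a t)) := by
  intro t ht hmem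
  have hα : 0 < a t := ha t ht
  set α := a t with hαdef
  set A := F' (u t) with hA
  set w := u t - y with hw
  set By := ContinuousLinearMap.adjoint (F' y) * F' y with hBy
  set e := (F (u t) - F y - A w) + (F y - fδ) with he
  set S := Ring.inverse (ContinuousLinearMap.adjoint A * A + α • (1 : H →L[ℝ] H)) with hS
  -- decomposition of the right-hand side of the ODE
  have harg : ContinuousLinearMap.adjoint A (F (u t) - fδ) + α • (u t - z)
      = (ContinuousLinearMap.adjoint A * A + α • (1 : H →L[ℝ] H)) w
        + (ContinuousLinearMap.adjoint A e + α • (By v)) := by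
    rw [hz, he, hw]
    simp only [map_sub, map_add, ContinuousLinearMap.add_apply,
      ContinuousLinearMap.mul_apply, ContinuousLinearMap.smul_apply,
      ContinuousLinearMap.one_apply, smul_sub, smul_add]
    module
  have hu' : u' t = -(w + (S (ContinuousLinearMap.adjoint A e) + α • S (By v))) := by
    have h0 := hode t ht hmem
    rw [← hA, ← hαdef] at h0
    rw [harg] at h0
    rw [h0]
    show -(S ((ContinuousLinearMap.adjoint A * A + α • (1 : H →L[ℝ] H)) w
      + (ContinuousLinearMap.adjoint A e + α • By v))) = _
    rw [map_add, map_add, map_smul, aux_SL A hα w]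
  -- inner product identity
  have hinner : ⟪u' t, w⟫ = -(‖w‖ ^ 2
      + (⟪S (ContinuousLinearMap.adjoint A e), w⟫ + α * ⟪S (By v), w⟫)) := by
    rw [hu']
    simp only [inner_neg_left, inner_add_left, real_inner_smul_left,
      real_inner_self_eq_norm_sq]
  -- Lipschitz bound for F'
  have hlip : ∀ x ∈ closedBall u₀ R, ∀ x' ∈ closedBall u₀ R,
      ‖F' x - F' x'‖ ≤ M₂ * ‖x - x'‖ := by
    intro x hx x' hx'
    exact (convex_closedBall u₀ R).norm_image_sub_le_of_norm_hasFDerivWithin_le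
      (fun p hp => (hF'' p hp).hasFDerivWithinAt) hM₂bd hx' hx
  -- Taylor bound
  have hwy : ‖y - u t‖ = ‖w‖ := by rw [hw, norm_sub_rev]
  have hK : ‖F y - F (u t) - A (y - u t)‖ ≤ M₂ / 2 * ‖w‖ ^ 2 := by
    have := aux_taylor (convex_closedBall u₀ R) hF' hlip hmem hy
    rwa [hwy] at this
  have he_bound : ‖e‖ ≤ M₂ / 2 * ‖w‖ ^ 2 + δ := by
    have h1 : F (u t) - F y - A w = -(F y - F (u t) - A (y - u t)) := by
      rw [hw, map_sub, map_sub]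
      abel
    have h2 : ‖F y - fδ‖ ≤ δ := by rwa [norm_sub_rev]
    calc ‖e‖ ≤ ‖F (u t) - F y - A w‖ + ‖F y - fδ‖ := norm_add_le _ _
      _ ≤ M₂ / 2 * ‖w‖ ^ 2 + δ := by
          rw [h1, norm_neg]
          exact add_le_add hK h2
  -- bound on the perturbation term
  have hnorm1 : ‖F' y - A‖ ≤ M₂ * ‖w‖ := by
    have := hlip y hy (u t) hmem
    rwa [hwy] at this
  have hDv : ‖By v - (ContinuousLinearMap.adjoint A * A) v‖
      ≤ 2 * M₁ * M₂ * ‖w‖ * ‖v‖ := by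
    have hdecomp : By v - (ContinuousLinearMap.adjoint A * A) v
        = (ContinuousLinearMap.adjoint (F' y - A)) (F' y v)
          + ContinuousLinearMap.adjoint A ((F' y - A) v) := by
      rw [hBy]
      simp only [map_sub, ContinuousLinearMap.sub_apply, ContinuousLinearMap.mul_apply]
      abel
    have a2 : ‖F' y v‖ ≤ M₁ * ‖v‖ :=
      ((F' y).le_opNorm v).trans (mul_le_mul_of_nonneg_right (hM₁bd y hy) (norm_nonneg v))
    have a3 : ‖(F' y - A) v‖ ≤ M₂ * ‖w‖ * ‖v‖ :=
      ((F' y - A).le_opNorm v).trans (mul_le_mul_of_nonneg_right hnorm1 (norm_nonneg v))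
    have a1 : ‖(ContinuousLinearMap.adjoint (F' y - A)) (F' y v)‖
        ≤ (M₂ * ‖w‖) * (M₁ * ‖v‖) := by
      calc ‖(ContinuousLinearMap.adjoint (F' y - A)) (F' y v)‖
          ≤ ‖ContinuousLinearMap.adjoint (F' y - A)‖ * ‖F' y v‖ :=
            ContinuousLinearMap.le_opNorm _ _
        _ = ‖F' y - A‖ * ‖F' y v‖ := by
            rw [ContinuousLinearMap.adjoint.norm_map]
        _ ≤ (M₂ * ‖w‖) * (M₁ * ‖v‖) := by
            apply mul_le_mul hnorm1 a2 (norm_nonneg _) (by positivity)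
    have a4 : ‖ContinuousLinearMap.adjoint A ((F' y - A) v)‖
        ≤ M₁ * (M₂ * ‖w‖ * ‖v‖) := by
      calc ‖ContinuousLinearMap.adjoint A ((F' y - A) v)‖
          ≤ ‖ContinuousLinearMap.adjoint A‖ * ‖(F' y - A) v‖ :=
            ContinuousLinearMap.le_opNorm _ _
        _ = ‖A‖ * ‖(F' y - A) v‖ := by rw [ContinuousLinearMap.adjoint.norm_map]
        _ ≤ M₁ * (M₂ * ‖w‖ * ‖v‖) := by
            apply mul_le_mul (hM₁bd (u t) hmem) a3 (norm_nonneg _) hM₁.le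
    calc ‖By v - (ContinuousLinearMap.adjoint A * A) v‖
        ≤ ‖(ContinuousLinearMap.adjoint (F' y - A)) (F' y v)‖
          + ‖ContinuousLinearMap.adjoint A ((F' y - A) v)‖ := by
          rw [hdecomp]; exact norm_add_le _ _
      _ ≤ (M₂ * ‖w‖) * (M₁ * ‖v‖) + M₁ * (M₂ * ‖w‖ * ‖v‖) := add_le_add a1 a4
      _ = 2 * M₁ * M₂ * ‖w‖ * ‖v‖ := by ring
  -- key scalar bounds
  have hs : 0 < Real.sqrt α := Real.sqrt_pos.mpr hα
  have hP : 2 * Real.sqrt α * ‖S (ContinuousLinearMap.adjoint A e)‖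
      ≤ M₂ / 2 * ‖w‖ ^ 2 + δ := by
    have h1 := aux_inv_adj A hα e
    rw [le_div_iff₀ (by positivity)] at h1
    nlinarith [he_bound]
  have hQ : α * ‖S (By v)‖ ≤ α * ‖v‖ + 2 * M₁ * M₂ * ‖w‖ * ‖v‖ := by
    have hsplit : S (By v) = S ((ContinuousLinearMap.adjoint A * A) v)
        + S (By v - (ContinuousLinearMap.adjoint A * A) v) := by
      rw [← map_add]; congr 1; abel
    have b1 : ‖S ((ContinuousLinearMap.adjoint A * A) v)‖ ≤ ‖v‖ := aux_inv_T A hα v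
    have b2 : ‖S (By v - (ContinuousLinearMap.adjoint A * A) v)‖
        ≤ ‖By v - (ContinuousLinearMap.adjoint A * A) v‖ / α := aux_inv_norm A hα _
    have b3 : ‖S (By v)‖ ≤ ‖v‖ + ‖By v - (ContinuousLinearMap.adjoint A * A) v‖ / α := by
      rw [hsplit]
      exact (norm_add_le _ _).trans (add_le_add b1 b2)
    calc α * ‖S (By v)‖
        ≤ α * (‖v‖ + ‖By v - (ContinuousLinearMap.adjoint A * A) v‖ / α) :=
          mul_le_mul_of_nonneg_left b3 hα.le
      _ = α * ‖v‖ + ‖By v - (ContinuousLinearMap.adjoint A * A) v‖ := by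
          field_simp
      _ ≤ α * ‖v‖ + 2 * M₁ * M₂ * ‖w‖ * ‖v‖ := by linarith
  -- put everything together
  set P₀ := ‖S (ContinuousLinearMap.adjoint A e)‖ with hP₀
  set Q₀ := ‖S (By v)‖ with hQ₀
  have hip1 : -⟪S (ContinuousLinearMap.adjoint A e), w⟫ ≤ P₀ * ‖w‖ := by
    have h1 := abs_real_inner_le_norm (S (ContinuousLinearMap.adjoint A e)) w
    have h2 := neg_abs_le ⟪S (ContinuousLinearMap.adjoint A e), w⟫
    linarith
  have hip2 : -⟪S (By v), w⟫ ≤ Q₀ * ‖w‖ := by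
    have h1 := abs_real_inner_le_norm (S (By v)) w
    have h2 := neg_abs_le ⟪S (By v), w⟫
    linarith
  have hmain : ⟪u' t, w⟫ ≤ -‖w‖ ^ 2 + P₀ * ‖w‖ + α * Q₀ * ‖w‖ := by
    rw [hinner]
    have h3 : -(α * ⟪S (By v), w⟫) ≤ α * (Q₀ * ‖w‖) := by
      rw [← mul_neg]
      exact mul_le_mul_of_nonneg_left hip2 hα.le
    nlinarith
  have hP2 : P₀ * ‖w‖ ≤ (M₂ / 4) * ‖w‖ ^ 3 / Real.sqrt α
      + δ * ‖w‖ / (2 * Real.sqrt α) := by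
    have h1 : P₀ * ‖w‖ ≤ (M₂ / 2 * ‖w‖ ^ 2 + δ) * ‖w‖ / (2 * Real.sqrt α) := by
      rw [le_div_iff₀ (by positivity)]
      nlinarith [mul_le_mul_of_nonneg_right hP (norm_nonneg w)]
    have h2 : (M₂ / 2 * ‖w‖ ^ 2 + δ) * ‖w‖ / (2 * Real.sqrt α)
        = (M₂ / 4) * ‖w‖ ^ 3 / Real.sqrt α + δ * ‖w‖ / (2 * Real.sqrt α) := by
      field_simp
      ring
    linarith [h2 ▸ h1]
  have hQ2 : α * Q₀ * ‖w‖ ≤ α * ‖v‖ * ‖w‖ + 1 / 2 * ‖w‖ ^ 2 := by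
    nlinarith [mul_le_mul_of_nonneg_right hQ (norm_nonneg w),
      mul_le_mul_of_nonneg_right hv (sq_nonneg ‖w‖), norm_nonneg w]
  linarith
end
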